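/- Let M > 2 and β₁ ≥ β₂ > 0 and p_max > 0 be real numbers. Define p₁* = min( p_max, (β₁ − β₂ + p_max·β₁·β₂·(M − 2)) / (2·β₁·β₂·(M − 2)) ) and p₂* = p_max − p₁*. Then (p₁*, p₂*) is a global maximizer of R^mMIMO(p₁, p₂) = log₂(1 + (M − 2)·β₁·p₁) + log₂(1 + (M − 2)·β₂·p₂) over all p₁ ≥ 0, p₂ ≥ 0 with p₁ + p₂ ≤ p_max. -/
import Mathlib

lemma logb_sum_mono (x y z w : ℝ) (hx : 0 < x) (hy : 0 < y) (hz : 0 < z)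
    (hw : 0 < w) (h : x * y ≤ z * w) :
    Real.logb 2 x + Real.logb 2 y ≤ Real.logb 2 z + Real.logb 2 w := by
  rw [← Real.logb_mul hx.ne' hy.ne', ← Real.logb_mul hz.ne' hw.ne']
  exact Real.logb_le_logb_of_le one_lt_two (mul_pos hx hy) h

/-- Lemma 2: with `p₁* = min(p_max, (β₁ − β₂ + p_max·β₁·β₂·(M−2))/(2·β₁·β₂·(M−2)))`
and `p₂* = p_max − p₁*`, the pair `(p₁*, p₂*)` is a global maximizer of the
two-user mMIMO sum rate
`R(p₁,p₂) = log₂(1 + (M−2)·β₁·p₁) + log₂(1 + (M−2)·β₂·p₂)`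
over `{p₁ ≥ 0, p₂ ≥ 0, p₁ + p₂ ≤ p_max}`. -/
theorem mmimo_two_user_optimal_power
    (M β₁ β₂ pmax : ℝ) (hM : 2 < M) (hβ₂ : 0 < β₂) (hβ : β₂ ≤ β₁)
    (hpmax : 0 < pmax)
    (R : ℝ → ℝ → ℝ)
    (hR : ∀ p₁ p₂, R p₁ p₂ =
      Real.logb 2 (1 + (M - 2) * β₁ * p₁) +
      Real.logb 2 (1 + (M - 2) * β₂ * p₂))
    (p₁s p₂s : ℝ)
    (hp₁s : p₁s = min pmax
      ((β₁ - β₂ + pmax * β₁ * β₂ * (M - 2)) / (2 * β₁ * β₂ * (M - 2))))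
    (hp₂s : p₂s = pmax - p₁s) :
    (0 ≤ p₁s ∧ 0 ≤ p₂s ∧ p₁s + p₂s ≤ pmax) ∧
    (∀ p₁ p₂, 0 ≤ p₁ → 0 ≤ p₂ → p₁ + p₂ ≤ pmax → R p₁ p₂ ≤ R p₁s p₂s) := by
  have hc : (0:ℝ) < M - 2 := by linarith
  have hβ₁ : 0 < β₁ := lt_of_lt_of_le hβ₂ hβ
  have hD : (0:ℝ) < 2 * β₁ * β₂ * (M - 2) := by positivity
  set q : ℝ := (β₁ - β₂ + pmax * β₁ * β₂ * (M - 2)) / (2 * β₁ * β₂ * (M - 2)) with hq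
  have hqnn : 0 ≤ q := by
    apply div_nonneg _ hD.le
    nlinarith
  have hp1nn : 0 ≤ p₁s := by rw [hp₁s]; exact le_min hpmax.le hqnn
  have hp1le : p₁s ≤ pmax := by rw [hp₁s]; exact min_le_left _ _
  have hp2nn : 0 ≤ p₂s := by rw [hp₂s]; linarith
  have hsum : p₁s + p₂s ≤ pmax := by rw [hp₂s]; linarith
  refine ⟨⟨hp1nn, hp2nn, hsum⟩, ?_⟩
  intro p₁ p₂ h1 h2 h12
  rw [hR, hR]
  have hx : (0:ℝ) < 1 + (M - 2) * β₁ * p₁ := by nlinarith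
  have hy : (0:ℝ) < 1 + (M - 2) * β₂ * p₂ := by nlinarith
  have hz : (0:ℝ) < 1 + (M - 2) * β₁ * p₁s := by nlinarith
  have hw : (0:ℝ) < 1 + (M - 2) * β₂ * p₂s := by
    rw [hp₂s]; nlinarith
  apply logb_sum_mono _ _ _ _ hx hy hz hw
  -- key product inequality
  rcases le_total pmax q with hle | hge
  · -- p₁s = pmax, p₂s = 0, and β₁ - β₂ ≥ pmax·β₁·β₂·(M-2)
    have h1s : p₁s = pmax := by rw [hp₁s, min_eq_left hle]
    have h2s : p₂s = 0 := by rw [hp₂s, h1s]; ring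
    have hcond : pmax * β₁ * β₂ * (M - 2) ≤ β₁ - β₂ := by
      have := (le_div_iff₀ hD).mp hle
      nlinarith
    rw [h1s, h2s]
    nlinarith [mul_nonneg (mul_nonneg hc.le hβ₁.le)
        (sub_nonneg.mpr h12),
      mul_nonneg (mul_nonneg (mul_nonneg (mul_nonneg (mul_nonneg hc.le hc.le) hβ₁.le) hβ₂.le) h2)
        (sub_nonneg.mpr (by linarith : p₁ ≤ pmax)),
      mul_nonneg (sub_nonneg.mpr hcond) (mul_nonneg hc.le h2)]
  · -- p₁s = q
    have h1s : p₁s = q := by rw [hp₁s, min_eq_right hge]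
    have hcond : p₁s * (2 * β₁ * β₂ * (M - 2)) =
        β₁ - β₂ + pmax * β₁ * β₂ * (M - 2) := by
      rw [h1s, hq, div_mul_cancel₀ _ hD.ne']
    rw [hp₂s]
    nlinarith [sq_nonneg (p₁s - p₁),
      mul_nonneg (mul_nonneg (mul_nonneg hc.le hβ₁.le) (mul_nonneg hc.le hβ₂.le))
        (sq_nonneg (p₁s - p₁)),
      mul_nonneg hx.le (mul_nonneg (mul_nonneg hc.le hβ₂.le)
        (sub_nonneg.mpr h12)),
      mul_pos hc hβ₂, mul_pos hc hβ₁]
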